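/- For every θ ∈ (0,1), every ε > 0, and every t ≥ ε^θ: ∫_0^{t−ε^θ} ∫_ℝ e^{−2(t−s)ξ²} (1 − e^{−εξ²})² dξ ds ≤ (1/2) · (∫_ℝ (1 − e^{−η²})² η^{−2} dη) · ε^{1/2}, and the constant ∫_ℝ (1 − e^{−η²})² η^{−2} dη is finite. -/

import Mathlib

open MeasureTheory

lemma aux_exp_le (x : ℝ) (hx : 0 ≤ x) : 1 - Real.exp (-x) ≤ x := by
  nlinarith [Real.add_one_le_exp (-x)]

lemma aux_exp_nonneg (x : ℝ) (hx : 0 ≤ x) : 0 ≤ 1 - Real.exp (-x) := by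
  have : Real.exp (-x) ≤ 1 := Real.exp_le_one_iff.mpr (by linarith)
  linarith

lemma aux_exp_le_one (x : ℝ) (hx : 0 ≤ x) : 1 - Real.exp (-x) ≤ 1 := by
  have := Real.exp_pos (-x); linarith

/-- The constant is integrable. -/
lemma intF : Integrable (fun η : ℝ => (1 - Real.exp (-η ^ 2)) ^ 2 / η ^ 2) := by
  have hmeas : AEStronglyMeasurable (fun η : ℝ => (1 - Real.exp (-η ^ 2)) ^ 2 / η ^ 2)
      (volume : Measure ℝ) := by
    apply Measurable.aestronglyMeasurable; measurability
  have hint : Integrable (fun η : ℝ => 2 * (1 + η ^ 2)⁻¹) :=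
    integrable_inv_one_add_sq.const_mul 2
  refine hint.mono' hmeas (Filter.Eventually.of_forall fun η => ?_)
  have hx : (0:ℝ) ≤ η ^ 2 := sq_nonneg η
  have h1 := aux_exp_le (η ^ 2) hx
  have h0 := aux_exp_nonneg (η ^ 2) hx
  have h2 := aux_exp_le_one (η ^ 2) hx
  have hnn : 0 ≤ (1 - Real.exp (-η ^ 2)) ^ 2 / η ^ 2 := by positivity
  rw [Real.norm_of_nonneg hnn]
  rcases eq_or_ne η 0 with rfl | hη
  · simp
  · have hη2 : (0:ℝ) < η ^ 2 := by positivity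
    have hpos : (0:ℝ) < 1 + η ^ 2 := by positivity
    have hinv : 2 * (1 + η ^ 2)⁻¹ = 2 / (1 + η ^ 2) := by ring
    rw [hinv, div_le_div_iff₀ hη2 hpos]
    rcases le_total (η ^ 2) 1 with hle | hle
    · nlinarith
    · nlinarith [mul_le_mul h2 h2 h0 zero_le_one]

theorem stmt5 :
    Integrable (fun η : ℝ => (1 - Real.exp (-η ^ 2)) ^ 2 / η ^ 2) ∧
    ∀ θ ε t : ℝ, 0 < θ → θ < 1 → 0 < ε → ε ^ θ ≤ t →
      (∫ s in Set.Ioo (0 : ℝ) (t - ε ^ θ), ∫ ξ : ℝ,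
          Real.exp (-2 * (t - s) * ξ ^ 2) * (1 - Real.exp (-ε * ξ ^ 2)) ^ 2) ≤
        (1 / 2) * (∫ η : ℝ, (1 - Real.exp (-η ^ 2)) ^ 2 / η ^ 2) * ε ^ ((1 : ℝ) / 2) := by
  refine ⟨intF, ?_⟩
  intro θ ε t hθ hθ1 hε hεt
  set c : ℝ := ε ^ θ with hc_def
  have hc : 0 < c := Real.rpow_pos_of_pos hε θ
  set b : ℝ := t - c with hb_def
  have hb : 0 ≤ b := by simp [hb_def]; linarith
  set f : ℝ → ℝ → ℝ := fun s ξ =>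
    Real.exp (-2 * (t - s) * ξ ^ 2) * (1 - Real.exp (-ε * ξ ^ 2)) ^ 2 with hf_def
  have hFcont : Continuous (Function.uncurry f) := by
    have : Function.uncurry f = fun p : ℝ × ℝ =>
        Real.exp (-2 * (t - p.1) * p.2 ^ 2) * (1 - Real.exp (-ε * p.2 ^ 2)) ^ 2 := rfl
    rw [this]; fun_prop
  -- pointwise bound by a Gaussian, uniform for s ∈ Ioo 0 b
  have hfle : ∀ s ∈ Set.Ioo (0:ℝ) b, ∀ ξ : ℝ, ‖f s ξ‖ ≤ Real.exp (-c * ξ ^ 2) := by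
    intro s hs ξ
    have hts : c ≤ t - s := by
      rcases hs with ⟨hs0, hsb⟩
      simp only [hb_def] at hsb; linarith
    have h0 := aux_exp_nonneg (ε * ξ ^ 2) (by positivity)
    have h1 := aux_exp_le_one (ε * ξ ^ 2) (by positivity)
    have hsq : (1 - Real.exp (-ε * ξ ^ 2)) ^ 2 ≤ 1 := by
      rw [show -ε * ξ ^ 2 = -(ε * ξ ^ 2) by ring] at *
      nlinarith
    have hnn : 0 ≤ f s ξ := by
      apply mul_nonneg (Real.exp_pos _).le
      rw [show -ε * ξ ^ 2 = -(ε * ξ ^ 2) by ring]; positivity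
    rw [Real.norm_of_nonneg hnn, hf_def]
    calc Real.exp (-2 * (t - s) * ξ ^ 2) * (1 - Real.exp (-ε * ξ ^ 2)) ^ 2
        ≤ Real.exp (-2 * (t - s) * ξ ^ 2) * 1 := by
          apply mul_le_mul_of_nonneg_left hsq (Real.exp_pos _).le
      _ ≤ Real.exp (-c * ξ ^ 2) := by
          rw [mul_one]
          apply Real.exp_le_exp.mpr
          nlinarith [sq_nonneg ξ]
  have hGauss : Integrable (fun ξ : ℝ => Real.exp (-c * ξ ^ 2)) :=
    integrable_exp_neg_mul_sq hc
  have hint_s : ∀ s ∈ Set.Ioo (0:ℝ) b, Integrable (f s) := by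
    intro s hs
    exact hGauss.mono' (hFcont.comp (Continuous.prodMk_right s)).aestronglyMeasurable
      (Filter.Eventually.of_forall (hfle s hs))
  -- integrability on the product
  have haesm : AEStronglyMeasurable (Function.uncurry f)
      ((volume.restrict (Set.Ioo (0:ℝ) b)).prod volume) :=
    hFcont.aestronglyMeasurable
  have hprod : Integrable (Function.uncurry f)
      ((volume.restrict (Set.Ioo (0:ℝ) b)).prod volume) := by
    rw [integrable_prod_iff haesm]
    constructor
    · rw [ae_restrict_iff' measurableSet_Ioo]
      exact Filter.Eventually.of_forall fun s hs => hint_s s hs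
    · have hK : ∀ s ∈ Set.Ioo (0:ℝ) b,
          (∫ ξ : ℝ, ‖f s ξ‖) ≤ ∫ ξ : ℝ, Real.exp (-c * ξ ^ 2) := by
        intro s hs
        exact integral_mono (hint_s s hs).norm hGauss (hfle s hs)
      have hsm : AEStronglyMeasurable (fun s => ∫ ξ : ℝ, ‖f s ξ‖)
          (volume : Measure ℝ) := by
        have : StronglyMeasurable (Function.uncurry fun s ξ => ‖f s ξ‖) :=
          hFcont.norm.stronglyMeasurable
        exact this.integral_prod_right.aestronglyMeasurable
      apply Measure.integrableOn_of_bounded (M := ∫ ξ : ℝ, Real.exp (-c * ξ ^ 2))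
        measure_Ioo_lt_top.ne hsm
      rw [ae_restrict_iff' measurableSet_Ioo]
      refine Filter.Eventually.of_forall fun s hs => ?_
      have hnn : 0 ≤ ∫ ξ : ℝ, ‖f s ξ‖ :=
        integral_nonneg fun ξ => norm_nonneg _
      rw [Real.norm_of_nonneg hnn]
      exact hK s hs
  -- Fubini
  have hswap : (∫ s in Set.Ioo (0:ℝ) b, ∫ ξ : ℝ, f s ξ)
      = ∫ ξ : ℝ, ∫ s in Set.Ioo (0:ℝ) b, f s ξ :=
    integral_integral_swap hprod
  -- the inner s-integral of the Gaussian factor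
  have key : ∀ ξ : ℝ, ξ ≠ 0 →
      (∫ s in Set.Ioo (0:ℝ) b, Real.exp (-2 * (t - s) * ξ ^ 2)) ≤ (2 * ξ ^ 2)⁻¹ := by
    intro ξ hξ
    have hξ2 : (0:ℝ) < ξ ^ 2 := by positivity
    have hk : (0:ℝ) < 2 * ξ ^ 2 := by positivity
    rw [← integral_Ioc_eq_integral_Ioo, ← intervalIntegral.integral_of_le hb]
    have hderiv : ∀ s ∈ Set.uIcc (0:ℝ) b,
        HasDerivAt (fun s => (2 * ξ ^ 2)⁻¹ * Real.exp (-2 * (t - s) * ξ ^ 2))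
          (Real.exp (-2 * (t - s) * ξ ^ 2)) s := by
      intro s _
      have h1 : HasDerivAt (fun s : ℝ => -2 * (t - s) * ξ ^ 2) (2 * ξ ^ 2) s := by
        have h0 := ((hasDerivAt_id s).const_mul (2 * ξ ^ 2)).add_const (-2 * t * ξ ^ 2)
        have heq : (fun s : ℝ => 2 * ξ ^ 2 * id s + -2 * t * ξ ^ 2)
            = fun s : ℝ => -2 * (t - s) * ξ ^ 2 := by
          funext u; simp [id]; ring
        rw [heq] at h0
        simpa using h0
      have h2 := (h1.exp).const_mul ((2 * ξ ^ 2)⁻¹)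
      refine h2.congr_deriv ?_
      rw [mul_comm (Real.exp _) (2 * ξ ^ 2), ← mul_assoc, inv_mul_cancel₀ hk.ne', one_mul]
    have hcont0 : Continuous fun s : ℝ => Real.exp (-2 * (t - s) * ξ ^ 2) := by fun_prop
    have hcont : IntervalIntegrable (fun s => Real.exp (-2 * (t - s) * ξ ^ 2)) volume 0 b :=
      hcont0.intervalIntegrable 0 b
    rw [intervalIntegral.integral_eq_sub_of_hasDerivAt hderiv hcont]
    have he1 : Real.exp (-2 * (t - b) * ξ ^ 2) ≤ 1 := by
      apply Real.exp_le_one_iff.mpr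
      have : t - b = c := by simp [hb_def]
      rw [this]
      nlinarith
    have he2 : (0:ℝ) < Real.exp (-2 * (t - 0) * ξ ^ 2) := Real.exp_pos _
    have hkinv : (0:ℝ) < (2 * ξ ^ 2)⁻¹ := by positivity
    nlinarith
  -- pointwise bound for the ξ-integrand
  have hpt : ∀ ξ : ℝ, (∫ s in Set.Ioo (0:ℝ) b, f s ξ)
      ≤ (1 / 2) * ((1 - Real.exp (-ε * ξ ^ 2)) ^ 2 / ξ ^ 2) := by
    intro ξ
    have hA : 0 ≤ (1 - Real.exp (-ε * ξ ^ 2)) ^ 2 := sq_nonneg _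
    have hmul : (∫ s in Set.Ioo (0:ℝ) b, f s ξ)
        = (∫ s in Set.Ioo (0:ℝ) b, Real.exp (-2 * (t - s) * ξ ^ 2))
            * (1 - Real.exp (-ε * ξ ^ 2)) ^ 2 := by
      simp only [hf_def]
      rw [integral_mul_const]
    rw [hmul]
    rcases eq_or_ne ξ 0 with rfl | hξ
    · simp
    · have hξ2 : (0:ℝ) < ξ ^ 2 := by positivity
      calc (∫ s in Set.Ioo (0:ℝ) b, Real.exp (-2 * (t - s) * ξ ^ 2))
              * (1 - Real.exp (-ε * ξ ^ 2)) ^ 2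
          ≤ (2 * ξ ^ 2)⁻¹ * (1 - Real.exp (-ε * ξ ^ 2)) ^ 2 :=
            mul_le_mul_of_nonneg_right (key ξ hξ) hA
        _ = (1 / 2) * ((1 - Real.exp (-ε * ξ ^ 2)) ^ 2 / ξ ^ 2) := by
            field_simp
  -- substitution η = √ε ξ
  have hsqrt : (0:ℝ) < Real.sqrt ε := Real.sqrt_pos.mpr hε
  have hsub : ∀ ξ : ℝ,
      (1 - Real.exp (-(Real.sqrt ε * ξ) ^ 2)) ^ 2 / (Real.sqrt ε * ξ) ^ 2
        = ((1 - Real.exp (-ε * ξ ^ 2)) ^ 2 / ξ ^ 2) / ε := by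
    intro ξ
    have hsq : (Real.sqrt ε * ξ) ^ 2 = ε * ξ ^ 2 := by
      rw [mul_pow, Real.sq_sqrt hε.le]
    rw [hsq, show -(ε * ξ ^ 2) = -ε * ξ ^ 2 by ring, div_div,
      mul_comm (ξ ^ 2) ε, ← div_div]
  have hptwise : ∀ ξ : ℝ, (1 - Real.exp (-ε * ξ ^ 2)) ^ 2 / ξ ^ 2
      = ε * ((1 - Real.exp (-(Real.sqrt ε * ξ) ^ 2)) ^ 2 / (Real.sqrt ε * ξ) ^ 2) := by
    intro ξ
    rw [hsub ξ]
    field_simp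
  have hcomp : Integrable
      (fun ξ : ℝ => (1 - Real.exp (-(Real.sqrt ε * ξ) ^ 2)) ^ 2 / (Real.sqrt ε * ξ) ^ 2) :=
    intF.comp_mul_left' hsqrt.ne'
  have hInth : Integrable (fun ξ : ℝ => (1 - Real.exp (-ε * ξ ^ 2)) ^ 2 / ξ ^ 2) := by
    exact (hcomp.const_mul ε).congr
      (Filter.Eventually.of_forall fun ξ => (hptwise ξ).symm)
  have hval : (∫ ξ : ℝ, (1 - Real.exp (-ε * ξ ^ 2)) ^ 2 / ξ ^ 2)
      = Real.sqrt ε * ∫ η : ℝ, (1 - Real.exp (-η ^ 2)) ^ 2 / η ^ 2 := by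
    have h1 : (∫ ξ : ℝ, (1 - Real.exp (-ε * ξ ^ 2)) ^ 2 / ξ ^ 2)
        = ∫ ξ : ℝ, ε * ((1 - Real.exp (-(Real.sqrt ε * ξ) ^ 2)) ^ 2 / (Real.sqrt ε * ξ) ^ 2) := by
      simp_rw [hptwise]
    rw [h1, integral_const_mul,
      Measure.integral_comp_mul_left
        (fun η : ℝ => (1 - Real.exp (-η ^ 2)) ^ 2 / η ^ 2) (Real.sqrt ε)]
    rw [abs_of_pos (inv_pos.mpr hsqrt), smul_eq_mul, ← mul_assoc]
    congr 1
    rw [mul_inv_eq_iff_eq_mul₀ hsqrt.ne']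
    exact (Real.mul_self_sqrt hε.le).symm
  -- integrability of the swapped inner integral
  have hIntInner : Integrable (fun ξ : ℝ => ∫ s in Set.Ioo (0:ℝ) b, f s ξ) :=
    hprod.integral_prod_right
  -- put everything together
  have hfinal : (∫ s in Set.Ioo (0:ℝ) b, ∫ ξ : ℝ, f s ξ)
      ≤ (1 / 2) * (∫ η : ℝ, (1 - Real.exp (-η ^ 2)) ^ 2 / η ^ 2) * ε ^ ((1:ℝ) / 2) := by
    rw [hswap]
    calc (∫ ξ : ℝ, ∫ s in Set.Ioo (0:ℝ) b, f s ξ)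
        ≤ ∫ ξ : ℝ, (1 / 2) * ((1 - Real.exp (-ε * ξ ^ 2)) ^ 2 / ξ ^ 2) :=
          integral_mono hIntInner (hInth.const_mul _) hpt
      _ = (1 / 2) * ∫ ξ : ℝ, (1 - Real.exp (-ε * ξ ^ 2)) ^ 2 / ξ ^ 2 :=
          integral_const_mul _ _
      _ = (1 / 2) * (∫ η : ℝ, (1 - Real.exp (-η ^ 2)) ^ 2 / η ^ 2) * ε ^ ((1:ℝ) / 2) := by
          rw [hval, ← Real.sqrt_eq_rpow]
          ring
  exact hfinal
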